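/- Let $(a_{k,r})_{(k,r) \in \mathbb{Z}^2}$ be complex numbers with $\sum_{(k,r)} (1 + |k| + |r|) |a_{k,r}| < \infty$. Then $\sum_{k,r \geq 0} \big(\sum_{t \geq k, s \geq r} |a_{t,s}|\big)^2 \leq \big(\sum_{t,s \geq 0} (1 + t + s) |a_{t,s}|\big)^2$. -/

import Mathlib

open scoped ENNReal

private def fibEquiv (n : ℕ) : {p : ℕ × ℕ // p.1 + p.2 = n} ≃ Fin (n+1) where
  toFun p := ⟨p.1.1, by have := p.2; omega⟩
  invFun i := ⟨(i, n - i), by have := i.2; omega⟩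
  left_inv p := by have := p.2; ext <;> simp <;> omega
  right_inv i := by ext; simp

private lemma count_lemma (g : ℕ → ℝ≥0∞) :
    ∑' k, ∑' t, g (k+t) = ∑' n, (n+1 : ℕ) * g n := by
  rw [← ENNReal.tsum_prod, ← (Equiv.sigmaFiberEquiv (fun p : ℕ × ℕ => p.1 + p.2)).tsum_eq,
    ENNReal.tsum_sigma']
  refine tsum_congr fun n => ?_
  have h1 : ∀ p : {p : ℕ × ℕ // p.1 + p.2 = n},
      g (((Equiv.sigmaFiberEquiv (fun p : ℕ × ℕ => p.1 + p.2)) ⟨n, p⟩).1 +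
         ((Equiv.sigmaFiberEquiv (fun p : ℕ × ℕ => p.1 + p.2)) ⟨n, p⟩).2) = g n := by
    intro p; simp [Equiv.sigmaFiberEquiv, p.2]
  calc ∑' p : {p : ℕ × ℕ // p.1 + p.2 = n},
        g (((Equiv.sigmaFiberEquiv (fun p : ℕ × ℕ => p.1 + p.2)) ⟨n, p⟩).1 +
           ((Equiv.sigmaFiberEquiv (fun p : ℕ × ℕ => p.1 + p.2)) ⟨n, p⟩).2)
      = ∑' _ : {p : ℕ × ℕ // p.1 + p.2 = n}, g n := tsum_congr h1
    _ = ∑' _ : Fin (n+1), g n := ((fibEquiv n).symm.tsum_eq _).symm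
    _ = (n+1 : ℕ) * g n := by
        rw [tsum_fintype]; simp [Finset.sum_const, nsmul_eq_mul]

private lemma shift_le (g : ℕ → ℝ≥0∞) (r : ℕ) : ∑' s, g (r+s) ≤ ∑' s, g s :=
  Summable.tsum_le_tsum_of_inj (fun s => r+s) (add_right_injective r) (fun _ _ => zero_le)
    (fun _ => le_rfl) ENNReal.summable ENNReal.summable

/-- If `∑ (1+|k|+|r|)|a_{k,r}| < ∞` then
`∑_{k,r ≥ 0} (∑_{t ≥ k, s ≥ r} |a_{t,s}|)² ≤ (∑_{t,s ≥ 0} (1+t+s)|a_{t,s}|)²`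
(stated in `ℝ≥0∞` so that all sums are well defined). -/
theorem tail_sum_square_estimate
    (a : ℤ × ℤ → ℂ)
    (h : Summable (fun p : ℤ × ℤ => (1 + |p.1| + |p.2| : ℝ) * ‖a p‖)) :
    (∑' k : ℕ, ∑' r : ℕ,
        (∑' t : ℕ, ∑' s : ℕ, (‖a ((k + t : ℕ), (r + s : ℕ))‖₊ : ℝ≥0∞)) ^ 2)
      ≤ (∑' t : ℕ, ∑' s : ℕ,
          ((1 + t + s : ℕ) : ℝ≥0∞) * (‖a ((t : ℤ), (s : ℤ))‖₊ : ℝ≥0∞)) ^ 2 := by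
  set f : ℕ → ℕ → ℝ≥0∞ := fun n m => (‖a ((n : ℤ), (m : ℤ))‖₊ : ℝ≥0∞) with hf
  set T : ℕ → ℕ → ℝ≥0∞ := fun k r => ∑' t, ∑' s, f (k+t) (r+s) with hT
  set B : ℝ≥0∞ := ∑' t : ℕ, ∑' s : ℕ, ((1 + t + s : ℕ) : ℝ≥0∞) * f t s with hB
  have key1 : ∀ k r, T k r ≤ T k 0 := by
    intro k r
    refine Summable.tsum_le_tsum (fun t => ?_) ENNReal.summable ENNReal.summable
    simpa using shift_le (fun s => f (k+t) s) r
  have key2 : ∀ k r, T k r ≤ T 0 r := by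
    intro k r
    have := shift_le (fun t => ∑' s, f t (r+s)) k
    simpa [hT] using this
  have hA : (∑' k, T k 0) ≤ B := by
    have swap : (∑' k, T k 0) = ∑' s, ∑' k, ∑' t, f (k+t) s := by
      simp only [hT, zero_add]
      calc ∑' (k : ℕ) (t : ℕ) (s : ℕ), f (k+t) s
          = ∑' (k : ℕ) (s : ℕ) (t : ℕ), f (k+t) s :=
            tsum_congr fun k => ENNReal.tsum_comm
        _ = ∑' (s : ℕ) (k : ℕ) (t : ℕ), f (k+t) s := ENNReal.tsum_comm
    rw [swap]
    calc ∑' s, ∑' k, ∑' t, f (k+t) s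
        = ∑' s, ∑' n, (n+1 : ℕ) * f n s := by
          exact tsum_congr fun s => count_lemma (fun n => f n s)
      _ = ∑' n, ∑' s, (n+1 : ℕ) * f n s := ENNReal.tsum_comm
      _ ≤ B := by
          refine Summable.tsum_le_tsum (fun n => Summable.tsum_le_tsum (fun s => ?_)
            ENNReal.summable ENNReal.summable) ENNReal.summable ENNReal.summable
          exact mul_le_mul' (Nat.cast_le.mpr (by omega)) le_rfl
  have hA' : (∑' r, T 0 r) ≤ B := by
    have swap : (∑' r, T 0 r) = ∑' t, ∑' r, ∑' s, f t (r+s) := by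
      simp only [hT, zero_add]
      exact ENNReal.tsum_comm
    rw [swap]
    calc ∑' t, ∑' r, ∑' s, f t (r+s)
        = ∑' t, ∑' m, (m+1 : ℕ) * f t m :=
          tsum_congr fun t => count_lemma (fun m => f t m)
      _ ≤ B := by
          refine Summable.tsum_le_tsum (fun t => Summable.tsum_le_tsum (fun m => ?_)
            ENNReal.summable ENNReal.summable) ENNReal.summable ENNReal.summable
          exact mul_le_mul' (Nat.cast_le.mpr (by omega)) le_rfl
  have main : (∑' k : ℕ, ∑' r : ℕ, (T k r) ^ 2) ≤ B ^ 2 := by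
    calc ∑' k : ℕ, ∑' r : ℕ, (T k r) ^ 2
        ≤ ∑' k : ℕ, ∑' r : ℕ, T k 0 * T 0 r := by
          refine Summable.tsum_le_tsum (fun k => Summable.tsum_le_tsum (fun r => ?_)
            ENNReal.summable ENNReal.summable) ENNReal.summable ENNReal.summable
          rw [sq]
          exact mul_le_mul' (key1 k r) (key2 k r)
      _ = (∑' k, T k 0) * (∑' r, T 0 r) := by
          simp_rw [ENNReal.tsum_mul_left]
          rw [ENNReal.tsum_mul_right]
      _ ≤ B * B := mul_le_mul' hA hA'
      _ = B ^ 2 := (sq B).symm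
  exact main
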